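/- For all real ξ and all real a with |a| < π/2, (1 − |cos(2a)|)/(1 + |cos(2a)|) ≤ |tanh(ξ + ia)|² ≤ (1 + |cos(2a)|)/(1 − |cos(2a)|). -/

import Mathlib

open Real

/-- for |a| < π/2,
(1−|cos 2a|)/(1+|cos 2a|) ≤ |tanh(ξ+ia)|² and
(1−|cos 2a|)·|tanh(ξ+ia)|² ≤ 1+|cos 2a| (the upper bound stated in
denominator-free form). -/
theorem stmt7 (ξ a : ℝ) (ha : |a| < π / 2) :
    (1 - |Real.cos (2 * a)|) / (1 + |Real.cos (2 * a)|) ≤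
        ‖Complex.tanh ((ξ : ℂ) + (a : ℂ) * Complex.I)‖ ^ 2 ∧
      (1 - |Real.cos (2 * a)|) *
          ‖Complex.tanh ((ξ : ℂ) + (a : ℂ) * Complex.I)‖ ^ 2 ≤
        1 + |Real.cos (2 * a)| := by
  obtain ⟨ha1, ha2⟩ := abs_lt.mp ha
  have hcos : 0 < Real.cos a := Real.cos_pos_of_mem_Ioo ⟨ha1, ha2⟩
  set z : ℂ := (ξ : ℂ) + (a : ℂ) * Complex.I with hz
  have hsinh : Complex.sinh z = (Real.sinh ξ * Real.cos a : ℝ) +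
      (Real.cosh ξ * Real.sin a : ℝ) * Complex.I := by
    rw [hz, Complex.sinh_add, Complex.sinh_mul_I, Complex.cosh_mul_I]
    push_cast
    ring
  have hcosh : Complex.cosh z = (Real.cosh ξ * Real.cos a : ℝ) +
      (Real.sinh ξ * Real.sin a : ℝ) * Complex.I := by
    rw [hz, Complex.cosh_add, Complex.sinh_mul_I, Complex.cosh_mul_I]
    push_cast
    ring
  set s : ℝ := Real.sinh ξ ^ 2 * Real.cos a ^ 2 + Real.cosh ξ ^ 2 * Real.sin a ^ 2 with hs
  set t : ℝ := Real.cosh ξ ^ 2 * Real.cos a ^ 2 + Real.sinh ξ ^ 2 * Real.sin a ^ 2 with ht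
  have habs : ‖Complex.tanh z‖ ^ 2 = s / t := by
    have h : Complex.tanh z = Complex.sinh z / Complex.cosh z := rfl
    rw [h, norm_div, div_pow, Complex.sq_norm, Complex.sq_norm,
      hsinh, hcosh, Complex.normSq_add_mul_I, Complex.normSq_add_mul_I]
    rw [hs, ht]; ring_nf
  have hpyth : Real.sin a ^ 2 + Real.cos a ^ 2 = 1 := Real.sin_sq_add_cos_sq a
  have hhyp : Real.cosh ξ ^ 2 - Real.sinh ξ ^ 2 = 1 := Real.cosh_sq_sub_sinh_sq ξ
  have ht0 : 0 < t := by
    have h1 : 0 < Real.cosh ξ ^ 2 * Real.cos a ^ 2 := by positivity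
    nlinarith [sq_nonneg (Real.sinh ξ * Real.sin a)]
  have hseq : s = (Real.cosh (2 * ξ) - Real.cos (2 * a)) / 2 := by
    rw [Real.cosh_two_mul, Real.cos_two_mul, hs]; nlinarith
  have hteq : t = (Real.cosh (2 * ξ) + Real.cos (2 * a)) / 2 := by
    rw [Real.cosh_two_mul, Real.cos_two_mul, ht]; nlinarith
  set X := Real.cosh (2 * ξ) with hXdef
  set c := Real.cos (2 * a) with hcdef
  have hX1 : 1 ≤ X := Real.one_le_cosh _
  have hXc : 0 < X + c := by rw [hteq] at ht0; linarith
  have hcc : -(|c|) ≤ c ∧ c ≤ |c| := abs_le.mp le_rfl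
  have hc0 : 0 ≤ |c| := abs_nonneg c
  have key : (X - c) / 2 / ((X + c) / 2) = (X - c) / (X + c) := by
    field_simp
  constructor
  · rw [habs, hseq, hteq, key, div_le_div_iff₀ (by linarith) hXc]
    nlinarith [mul_le_mul_of_nonneg_right hX1 hc0]
  · rw [habs, hseq, hteq, key, mul_div_assoc', div_le_iff₀ hXc]
    nlinarith [mul_le_mul_of_nonneg_right hX1 hc0]
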